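/- Let n ≥ 1, let η ∈ ℝⁿ with ‖η‖ = 1, let λ ≠ 0 and set V := λη. Define g : ℝⁿ → ℝ by g(p) = 2^{−1/3}(‖p‖^{4/3}‖V‖² − 4‖p‖^{−2/3}⟪p,V⟫²) for p ≠ 0. Then for every t ≠ 0 and p := tη, the second derivative of g at p evaluated at (η, η) equals −(2^{5/3}/3)‖p‖^{−2/3}λ², which is strictly negative. (Hence the cost c(x,y) = ‖x−y‖⁻² does not satisfy the non-negative cross-curvature condition (NNCC), which would require this quantity to be nonnegative for all V, η without the orthogonality restriction.) -/

import Mathlib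

open RealInnerProductSpace

set_option maxHeartbeats 1600000 in
/-- Failure of the non-negative cross-curvature condition (NNCC) for the cost
`c(x,y) = ‖x − y‖⁻²`: with `η` a unit vector, `V = λη` for `λ ≠ 0`, and
`g(p) = 2^{−1/3}(‖p‖^{4/3}‖V‖² − 4‖p‖^{−2/3}⟪p,V⟫²)` (defined for `p ≠ 0`), for every
`t ≠ 0` and `p = tη` the second derivative of `g` at `p` evaluated at `(η, η)` equals
`−(2^{5/3}/3)‖p‖^{−2/3}λ² < 0`. -/
theorem NNCC_fails_inv_square_cost
    (n : ℕ) (hn : 1 ≤ n) (η : EuclideanSpace ℝ (Fin n)) (hη : ‖η‖ = 1)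
    (l : ℝ) (hl : l ≠ 0) (V : EuclideanSpace ℝ (Fin n)) (hV : V = l • η)
    (g : EuclideanSpace ℝ (Fin n) → ℝ)
    (hg : ∀ q : EuclideanSpace ℝ (Fin n), q ≠ 0 →
      g q = (2 : ℝ) ^ (-(1 / 3 : ℝ)) *
        (‖q‖ ^ ((4 : ℝ) / 3) * ‖V‖ ^ 2 - 4 * ‖q‖ ^ (-(2 / 3 : ℝ)) * ⟪q, V⟫ ^ 2))
    (t : ℝ) (ht : t ≠ 0) (p : EuclideanSpace ℝ (Fin n)) (hp : p = t • η) :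
    fderiv ℝ (fun q => fderiv ℝ g q) p η η =
      -((2 : ℝ) ^ ((5 : ℝ) / 3) / 3) * ‖p‖ ^ (-(2 / 3 : ℝ)) * l ^ 2 ∧
    fderiv ℝ (fun q => fderiv ℝ g q) p η η < 0 := by
  have hη0 : η ≠ 0 := by
    intro h; rw [h, norm_zero] at hη; norm_num at hη
  have hp0 : p ≠ 0 := by rw [hp]; exact smul_ne_zero ht hη0
  have hηη : (⟪η, η⟫ : ℝ) = 1 := by
    rw [real_inner_self_eq_norm_sq, hη]; norm_num
  set C : ℝ := (2 : ℝ) ^ (-(1 / 3 : ℝ)) * l ^ 2 with hCdef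
  -- derivative of ⟪y,y⟫
  have hS : ∀ q : EuclideanSpace ℝ (Fin n),
      HasFDerivAt (fun y : EuclideanSpace ℝ (Fin n) => (⟪y, y⟫ : ℝ))
        ((2 : ℝ) • innerSL ℝ q) q := by
    intro q
    refine ((hasFDerivAt_id (𝕜 := ℝ) q).inner ℝ (hasFDerivAt_id q)).congr_fderiv ?_
    ext x; simp [fderivInnerCLM, two_smul, mul_comm]; exact real_inner_comm _ _
  -- derivative of ⟪y,y⟫ ^ a
  have hPow : ∀ q : EuclideanSpace ℝ (Fin n), q ≠ 0 → ∀ a : ℝ,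
      HasFDerivAt (fun y : EuclideanSpace ℝ (Fin n) => (⟪y, y⟫ : ℝ) ^ a)
        ((a * (⟪q, q⟫ : ℝ) ^ (a - 1)) • ((2 : ℝ) • innerSL ℝ q)) q := by
    intro q hq a
    exact HasDerivAt.comp_hasFDerivAt
      (f := fun y : EuclideanSpace ℝ (Fin n) => (⟪y, y⟫ : ℝ)) q
      (Real.hasDerivAt_rpow_const (x := ⟪q, q⟫) (Or.inl (inner_self_ne_zero.mpr hq))) (hS q)
  -- derivative of ⟪y,η⟫
  have hW : ∀ q : EuclideanSpace ℝ (Fin n),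
      HasFDerivAt (fun y : EuclideanSpace ℝ (Fin n) => (⟪y, η⟫ : ℝ)) (innerSL ℝ η) q := by
    intro q
    have h : (fun y : EuclideanSpace ℝ (Fin n) => (⟪y, η⟫ : ℝ)) = fun y => innerSL ℝ η y := by
      funext y; exact real_inner_comm η y
    rw [h]; exact (innerSL ℝ η).hasFDerivAt
  -- the first derivative of g at any q ≠ 0
  have hfdg : ∀ q : EuclideanSpace ℝ (Fin n), q ≠ 0 →
      HasFDerivAt g
        ((C * ((4 : ℝ) / 3 * (⟪q, q⟫ : ℝ) ^ (-(1 / 3 : ℝ))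
            + (8 : ℝ) / 3 * (⟪q, q⟫ : ℝ) ^ (-(4 / 3 : ℝ)) * ((⟪q, η⟫ : ℝ) * (⟪q, η⟫ : ℝ)))) • innerSL ℝ q
          + (-8 * C * ((⟪q, q⟫ : ℝ) ^ (-(1 / 3 : ℝ)) * (⟪q, η⟫ : ℝ))) • innerSL ℝ η) q := by
    intro q hq
    have hG := ((hPow q hq ((2 : ℝ) / 3)).sub
      (((hPow q hq (-(1 / 3 : ℝ))).mul ((hW q).mul (hW q))).const_mul (4 : ℝ))).const_mul C
    refine HasFDerivAt.congr_of_eventuallyEq (hG.congr_fderiv ?_) ?_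
    · ext x
      have e1 : ((2 : ℝ) / 3 - 1 : ℝ) = -(1 / 3 : ℝ) := by norm_num
      have e2 : (-(1 / 3 : ℝ) - 1 : ℝ) = -(4 / 3 : ℝ) := by norm_num
      simp only [e1, e2, ContinuousLinearMap.add_apply, ContinuousLinearMap.smul_apply,
        ContinuousLinearMap.sub_apply, ContinuousLinearMap.smulRight_apply, smul_eq_mul,
        innerSL_apply_apply, Pi.mul_apply]
      ring_nf
    · filter_upwards [eventually_ne_nhds hq] with y hy
      have h1 : ‖y‖ ^ ((4 : ℝ) / 3) = (⟪y, y⟫ : ℝ) ^ ((2 : ℝ) / 3) := by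
        rw [real_inner_self_eq_norm_sq, ← Real.rpow_natCast ‖y‖ 2,
          ← Real.rpow_mul (norm_nonneg y)]
        norm_num
      have h2 : ‖y‖ ^ (-(2 / 3 : ℝ)) = (⟪y, y⟫ : ℝ) ^ (-(1 / 3 : ℝ)) := by
        rw [real_inner_self_eq_norm_sq, ← Real.rpow_natCast ‖y‖ 2,
          ← Real.rpow_mul (norm_nonneg y)]
        norm_num
      have h3 : (⟪y, V⟫ : ℝ) = l * ⟪y, η⟫ := by rw [hV, real_inner_smul_right]
      have h4 : ‖V‖ ^ 2 = l ^ 2 := by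
        rw [hV, norm_smul, hη, mul_one, Real.norm_eq_abs, sq_abs]
      rw [hg y hy, h1, h2, h3, h4, hCdef]
      simp only [Pi.sub_apply, Pi.mul_apply]
      ring
  -- second derivative pieces at p
  have hαp := (((hPow p hp0 (-(1 / 3 : ℝ))).const_mul ((4 : ℝ) / 3)).add
    (((hPow p hp0 (-(4 / 3 : ℝ))).const_mul ((8 : ℝ) / 3)).mul ((hW p).mul (hW p)))).const_mul C
  have hβp := ((hPow p hp0 (-(1 / 3 : ℝ))).mul (hW p)).const_mul (-8 * C)
  have hmain := (hαp.smul (innerSL ℝ).hasFDerivAt).add (hβp.smul_const (innerSL ℝ η))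
  have hev : (fun q => fderiv ℝ g q) =ᶠ[nhds p]
      (fun q : EuclideanSpace ℝ (Fin n) =>
        (C * ((4 : ℝ) / 3 * (⟪q, q⟫ : ℝ) ^ (-(1 / 3 : ℝ))
            + (8 : ℝ) / 3 * (⟪q, q⟫ : ℝ) ^ (-(4 / 3 : ℝ)) * ((⟪q, η⟫ : ℝ) * (⟪q, η⟫ : ℝ)))) • innerSL ℝ q
          + (-8 * C * ((⟪q, q⟫ : ℝ) ^ (-(1 / 3 : ℝ)) * (⟪q, η⟫ : ℝ))) • innerSL ℝ η) := by
    filter_upwards [eventually_ne_nhds hp0] with y hy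
    exact (hfdg y hy).fderiv
  have h2 := HasFDerivAt.congr_of_eventuallyEq hmain hev
  have hpp : (⟪p, p⟫ : ℝ) = t ^ 2 := by
    rw [hp, real_inner_smul_left, real_inner_smul_right, hηη]; ring
  have hpη : (⟪p, η⟫ : ℝ) = t := by
    rw [hp, real_inner_smul_left, hηη]; ring
  have hnp : ‖p‖ = |t| := by
    rw [hp, norm_smul, hη, Real.norm_eq_abs, mul_one]
  have ht2 : (0 : ℝ) < t ^ 2 := by positivity
  have hkey : fderiv ℝ (fun q => fderiv ℝ g q) p η η =
      -((2 : ℝ) ^ ((5 : ℝ) / 3) / 3) * ‖p‖ ^ (-(2 / 3 : ℝ)) * l ^ 2 := by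
    rw [h2.fderiv]
    simp only [ContinuousLinearMap.add_apply, ContinuousLinearMap.smul_apply,
      ContinuousLinearMap.smulRight_apply, ContinuousLinearMap.coe_smul', Pi.smul_apply,
      innerSL_apply_apply, Pi.add_apply, Pi.mul_apply, smul_eq_mul, hpp, hpη, hηη]
    have hipη : ((innerSL ℝ) p) η = t := hpη
    have hiηη : ((innerSL ℝ) η) η = 1 := hηη
    rw [hipη, hnp]
    have hB41 : ((t ^ 2 : ℝ)) ^ (-(1 / 3 : ℝ) - 1) = (t ^ 2) ^ (-(1 / 3 : ℝ)) * (t ^ 2)⁻¹ := by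
      rw [show (-(1 / 3 : ℝ) - 1) = -(1 / 3 : ℝ) + -1 by norm_num, Real.rpow_add ht2,
        Real.rpow_neg_one]
    have hB7 : ((t ^ 2 : ℝ)) ^ (-(4 / 3 : ℝ) - 1) =
        (t ^ 2) ^ (-(1 / 3 : ℝ)) * (t ^ 2)⁻¹ * (t ^ 2)⁻¹ := by
      rw [show (-(4 / 3 : ℝ) - 1) = -(1 / 3 : ℝ) + -1 + -1 by norm_num, Real.rpow_add ht2,
        Real.rpow_add ht2, Real.rpow_neg_one]
    have hB4 : ((t ^ 2 : ℝ)) ^ (-(4 / 3 : ℝ)) = (t ^ 2) ^ (-(1 / 3 : ℝ)) * (t ^ 2)⁻¹ := by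
      rw [show (-(4 / 3 : ℝ)) = -(1 / 3 : ℝ) + -1 by norm_num, Real.rpow_add ht2,
        Real.rpow_neg_one]
    have habs : |t| ^ (-(2 / 3 : ℝ)) = ((t ^ 2 : ℝ)) ^ (-(1 / 3 : ℝ)) := by
      rw [show (t ^ 2 : ℝ) = |t| ^ (2 : ℕ) by rw [sq_abs], ← Real.rpow_natCast |t| 2,
        ← Real.rpow_mul (abs_nonneg t)]
      norm_num
    have h2pow : (2 : ℝ) ^ ((5 : ℝ) / 3) = 4 * (2 : ℝ) ^ (-(1 / 3 : ℝ)) := by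
      rw [show ((5 : ℝ) / 3) = -(1 / 3 : ℝ) + ((2 : ℕ) : ℝ) by norm_num,
        Real.rpow_add (by norm_num : (0 : ℝ) < 2), Real.rpow_natCast]
      ring_nf
    simp only [hB7, hB41, hB4, habs, h2pow, hCdef, hiηη]
    field_simp
    ring
  exact ⟨hkey, by
    rw [hkey]
    have h1 : (0 : ℝ) < (2 : ℝ) ^ ((5 : ℝ) / 3) / 3 := by positivity
    have h2' : (0 : ℝ) < ‖p‖ ^ (-(2 / 3 : ℝ)) :=
      Real.rpow_pos_of_pos (norm_pos_iff.mpr hp0) _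
    have h3 : (0 : ℝ) < l ^ 2 := lt_of_le_of_ne (sq_nonneg l) (Ne.symm (pow_ne_zero 2 hl))
    nlinarith [mul_pos (mul_pos h1 h2') h3]⟩
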